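/- Let G be a triangle-free graph maximizing the number of 5-cycles among triangle-free graphs on its vertex set, partitioned as above into X_1,...,X_5 relative to a 5-cycle C with every vertex having exactly two neighbors on C. Then every u_i ∈ X_i is adjacent to every u_{i+1} ∈ X_{i+1} (indices mod 5). -/

import Mathlib

open SimpleGraph


/-- The number of (unlabeled) copies of `C₅` in a graph. -/
noncomputable def c5Count {V : Type*} [Fintype V] (G : SimpleGraph V) : ℕ :=
  Set.ncard {s : Finset V | s.card = 5 ∧
    Nonempty (G.induce (s : Set V) ≃g SimpleGraph.cycleGraph 5)}

/-- Let `G` be triangle-free on `n ≥ 10` vertices maximizing the number of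
5-cycles, with a 5-cycle `v₀…v₄` such that every vertex outside it has exactly
two neighbors on it, and `Xᵢ` the set of vertices with the same neighborhood on
the cycle as `vᵢ`. Then every vertex of `Xᵢ` is adjacent to every vertex of
`Xᵢ₊₁`. -/
theorem consecutive_classes_complete {V : Type*} [Fintype V]
    (G : SimpleGraph V) (hTF : G.CliqueFree 3)
    (hn : 10 ≤ Fintype.card V)
    (hmax : ∀ H : SimpleGraph V, H.CliqueFree 3 → c5Count H ≤ c5Count G)
    (v : Fin 5 → V) (hinj : Function.Injective v)
    (hcyc : ∀ i : Fin 5, G.Adj (v i) (v (i + 1)))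
    (htwo : ∀ u : V, u ∉ Set.range v → {j : Fin 5 | G.Adj u (v j)}.ncard = 2) :
    ∀ (i : Fin 5) (u w : V),
      (∀ j : Fin 5, G.Adj u (v j) ↔ G.Adj (v i) (v j)) →
      (∀ j : Fin 5, G.Adj w (v j) ↔ G.Adj (v (i + 1)) (v j)) →
      G.Adj u w := by
  intro i u w hu0 hw0
  by_contra huw
  classical
  have noTri : ∀ {a b c : V}, G.Adj a b → G.Adj a c → G.Adj b c → False := fun hab hac hbc =>
    hTF _ (SimpleGraph.is3Clique_triple_iff.mpr ⟨hab, hac, hbc⟩)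
  -- adjacency along the cycle
  have hvadj : ∀ j k : Fin 5, G.Adj (v j) (v k) ↔ (k = j + 1 ∨ j = k + 1) := by
    intro j k
    constructor
    · intro h
      rcases (by decide : ∀ j k : Fin 5, k = j+1 ∨ j = k+1 ∨ j = k ∨ k = j+2 ∨ j = k+2) j k with
        h1 | h1 | h1 | h1 | h1
      · exact Or.inl h1
      · exact Or.inr h1
      · exact absurd (h1 ▸ h) (G.loopless.irrefl _)
      · subst h1
        exact absurd (noTri (hcyc j) h
          (by have := hcyc (j+1); rwa [(by decide : ∀ j : Fin 5, j+1+1 = j+2) j] at this)) id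
      · subst h1
        exact absurd (noTri (hcyc k) h.symm
          (by have := hcyc (k+1); rwa [(by decide : ∀ j : Fin 5, j+1+1 = j+2) k] at this)) id
    · rintro (rfl | rfl)
      · exact hcyc j
      · exact (hcyc k).symm
  have hu : ∀ j : Fin 5, G.Adj u (v j) ↔ (j = i+1 ∨ j = i+4) := fun j =>
    (hu0 j).trans ((hvadj i j).trans
      ((by decide : ∀ i j : Fin 5, (j = i+1 ∨ i = j+1) ↔ (j = i+1 ∨ j = i+4)) i j))
  have hw : ∀ j : Fin 5, G.Adj w (v j) ↔ (j = i+2 ∨ j = i) := fun j =>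
    (hw0 j).trans ((hvadj (i+1) j).trans
      ((by decide : ∀ i j : Fin 5, (j = i+1+1 ∨ i+1 = j+1) ↔ (j = i+2 ∨ j = i)) i j))
  have hu1 : G.Adj u (v (i+1)) := (hu _).mpr (Or.inl rfl)
  have hu4 : G.Adj u (v (i+4)) := (hu _).mpr (Or.inr rfl)
  have hw2 : G.Adj w (v (i+2)) := (hw _).mpr (Or.inl rfl)
  have hwi : G.Adj w (v i) := (hw _).mpr (Or.inr rfl)
  have hnu2 : ¬ G.Adj u (v (i+2)) := fun h =>
    (by decide : ∀ i : Fin 5, ¬(i+2 = i+1 ∨ i+2 = i+4)) i ((hu _).mp h)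
  have hnu3 : ¬ G.Adj u (v (i+3)) := fun h =>
    (by decide : ∀ i : Fin 5, ¬(i+3 = i+1 ∨ i+3 = i+4)) i ((hu _).mp h)
  have hnw1 : ¬ G.Adj w (v (i+1)) := fun h =>
    (by decide : ∀ i : Fin 5, ¬(i+1 = i+2 ∨ i+1 = i)) i ((hw _).mp h)
  have hnw3 : ¬ G.Adj w (v (i+3)) := fun h =>
    (by decide : ∀ i : Fin 5, ¬(i+3 = i+2 ∨ i+3 = i)) i ((hw _).mp h)
  have hnw4 : ¬ G.Adj w (v (i+4)) := fun h =>
    (by decide : ∀ i : Fin 5, ¬(i+4 = i+2 ∨ i+4 = i)) i ((hw _).mp h)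
  -- cycle edges, rewritten
  have e23 : G.Adj (v (i+2)) (v (i+3)) := by
    have := hcyc (i+2); rwa [(by decide : ∀ i : Fin 5, i+2+1 = i+3) i] at this
  have e34 : G.Adj (v (i+3)) (v (i+4)) := by
    have := hcyc (i+3); rwa [(by decide : ∀ i : Fin 5, i+3+1 = i+4) i] at this
  have e12 : G.Adj (v (i+1)) (v (i+2)) := by
    have := hcyc (i+1); rwa [(by decide : ∀ i : Fin 5, i+1+1 = i+2) i] at this
  -- distinctness
  have huw' : u ≠ w := fun h => hnw1 (h ▸ hu1)
  have hune2 : u ≠ v (i+2) := fun h => hnu3 (h ▸ e23)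
  have hune3 : u ≠ v (i+3) := fun h => hnu2 (h ▸ e23.symm)
  have hune4 : u ≠ v (i+4) := fun h => hnu3 (h ▸ e34.symm)
  have hwne2 : w ≠ v (i+2) := fun h => hnw1 (h ▸ e12.symm)
  have hwne3 : w ≠ v (i+3) := fun h => hnw4 (h ▸ e34)
  have hwne4 : w ≠ v (i+4) := fun h => hnw3 (h ▸ e34.symm)
  have hv23 : v (i+2) ≠ v (i+3) := fun h =>
    (by decide : ∀ i : Fin 5, ¬(i+2 = i+3)) i (hinj h)
  have hv24 : v (i+2) ≠ v (i+4) := fun h =>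
    (by decide : ∀ i : Fin 5, ¬(i+2 = i+4)) i (hinj h)
  have hv34 : v (i+3) ≠ v (i+4) := fun h =>
    (by decide : ∀ i : Fin 5, ¬(i+3 = i+4)) i (hinj h)
  -- no common neighbor of u and w
  have hcommon : ∀ x : V, G.Adj u x → G.Adj w x → False := by
    intro x hxu hxw
    have hxnotv : x ∉ Set.range v := by
      rintro ⟨j, rfl⟩
      exact (by decide : ∀ i j : Fin 5, (j = i+1 ∨ j = i+4) → (j = i+2 ∨ j = i) → False) i j
        ((hu j).mp hxu) ((hw j).mp hxw)
    have hsub : {j : Fin 5 | G.Adj x (v j)} ⊆ {i+3} := by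
      intro j hj
      simp only [Set.mem_setOf_eq] at hj
      rcases (by decide : ∀ i j : Fin 5, j = i+1 ∨ j = i+4 ∨ j = i+2 ∨ j = i ∨ j = i+3) i j with
        rfl | rfl | rfl | rfl | rfl
      · exact (noTri hxu hu1 hj).elim
      · exact (noTri hxu hu4 hj).elim
      · exact (noTri hxw hw2 hj).elim
      · exact (noTri hxw hwi hj).elim
      · rfl
    have h2 := htwo x hxnotv
    have hle : ({j : Fin 5 | G.Adj x (v j)}).ncard ≤ 1 := by
      simpa using Set.ncard_le_ncard hsub (Set.finite_singleton _)
    omega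
  -- the augmented graph
  set H : SimpleGraph V := G ⊔ SimpleGraph.edge u w with hHdef
  have hH : ∀ a b : V, H.Adj a b ↔ G.Adj a b ∨ ((a = u ∧ b = w) ∨ (a = w ∧ b = u)) := by
    intro a b
    rw [hHdef, sup_adj, edge_adj]
    constructor
    · rintro (h | ⟨h, -⟩)
      · exact Or.inl h
      · exact Or.inr h
    · rintro (h | h)
      · exact Or.inl h
      · refine Or.inr ⟨h, ?_⟩
        rcases h with ⟨rfl, rfl⟩ | ⟨rfl, rfl⟩
        · exact huw'
        · exact huw'.symm
  have hHTF : H.CliqueFree 3 := by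
    intro t ht
    rw [SimpleGraph.is3Clique_iff] at ht
    obtain ⟨a, b, c, hab, hac, hbc, -⟩ := ht
    rw [hH] at hab hac hbc
    by_cases g1 : G.Adj a b
    · by_cases g2 : G.Adj a c
      · by_cases g3 : G.Adj b c
        · exact noTri g1 g2 g3
        · rcases hbc.resolve_left g3 with ⟨h1, h2⟩ | ⟨h1, h2⟩
          · exact hcommon a (h1 ▸ g1).symm (h2 ▸ g2).symm
          · exact hcommon a (h2 ▸ g2).symm (h1 ▸ g1).symm
      · rcases hac.resolve_left g2 with ⟨h1, h2⟩ | ⟨h1, h2⟩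
        · by_cases g3 : G.Adj b c
          · exact hcommon b (h1 ▸ g1) (h2 ▸ g3).symm
          · rcases hbc.resolve_left g3 with ⟨k1, k2⟩ | ⟨k1, k2⟩
            · rw [h1, k1] at g1; exact G.loopless.irrefl _ g1
            · exact huw' (k2.symm.trans h2)
        · by_cases g3 : G.Adj b c
          · exact hcommon b (h2 ▸ g3).symm (h1 ▸ g1)
          · rcases hbc.resolve_left g3 with ⟨k1, k2⟩ | ⟨k1, k2⟩
            · exact huw' (h2.symm.trans k2)
            · rw [h1, k1] at g1; exact G.loopless.irrefl _ g1
    · rcases hab.resolve_left g1 with ⟨h1, h2⟩ | ⟨h1, h2⟩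
      · by_cases g2 : G.Adj a c
        · by_cases g3 : G.Adj b c
          · exact hcommon c (h1 ▸ g2) (h2 ▸ g3)
          · rcases hbc.resolve_left g3 with ⟨k1, k2⟩ | ⟨k1, k2⟩
            · exact huw' (k1.symm.trans h2)
            · rw [h1, k2] at g2; exact G.loopless.irrefl _ g2
        · rcases hac.resolve_left g2 with ⟨k1, k2⟩ | ⟨k1, k2⟩
          · by_cases g3 : G.Adj b c
            · rw [h2, k2] at g3; exact G.loopless.irrefl _ g3
            · rcases hbc.resolve_left g3 with ⟨m1, m2⟩ | ⟨m1, m2⟩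
              · exact huw' (m1.symm.trans h2)
              · exact huw' (m2.symm.trans k2)
          · exact huw' (h1.symm.trans k1)
      · by_cases g2 : G.Adj a c
        · by_cases g3 : G.Adj b c
          · exact hcommon c (h2 ▸ g3) (h1 ▸ g2)
          · rcases hbc.resolve_left g3 with ⟨k1, k2⟩ | ⟨k1, k2⟩
            · rw [h1, k2] at g2; exact G.loopless.irrefl _ g2
            · exact huw' (h2.symm.trans k1)
        · rcases hac.resolve_left g2 with ⟨k1, k2⟩ | ⟨k1, k2⟩
          · exact huw' (k1.symm.trans h1)
          · by_cases g3 : G.Adj b c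
            · rw [h2, k2] at g3; exact G.loopless.irrefl _ g3
            · rcases hbc.resolve_left g3 with ⟨m1, m2⟩ | ⟨m1, m2⟩
              · exact huw' (k2.symm.trans m2)
              · exact huw' (h2.symm.trans m1)
  -- every 5-cycle of G is a 5-cycle of H
  have hsubset : {s : Finset V | s.card = 5 ∧
      Nonempty (G.induce (s : Set V) ≃g cycleGraph 5)} ⊆
      {s : Finset V | s.card = 5 ∧ Nonempty (H.induce (s : Set V) ≃g cycleGraph 5)} := by
    rintro s ⟨hcard, ⟨e⟩⟩
    refine ⟨hcard, ?_⟩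
    have hnot : ¬(u ∈ (s : Set V) ∧ w ∈ (s : Set V)) := by
      rintro ⟨hus, hws⟩
      have hne : e ⟨u, hus⟩ ≠ e ⟨w, hws⟩ := fun h => huw' (congrArg Subtype.val (e.injective h))
      have hnadj : ¬ (cycleGraph 5).Adj (e ⟨u, hus⟩) (e ⟨w, hws⟩) := by
        rw [e.map_rel_iff]
        exact fun h => huw h
      obtain ⟨c, hca, hcb⟩ := (by decide : ∀ a b : Fin 5, a ≠ b → ¬(cycleGraph 5).Adj a b →
        ∃ c, (cycleGraph 5).Adj a c ∧ (cycleGraph 5).Adj b c) _ _ hne hnadj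
      have h1 : (G.induce (s : Set V)).Adj ⟨u, hus⟩ (e.symm c) := by
        rw [← e.map_rel_iff, RelIso.apply_symm_apply]; exact hca
      have h2 : (G.induce (s : Set V)).Adj ⟨w, hws⟩ (e.symm c) := by
        rw [← e.map_rel_iff, RelIso.apply_symm_apply]; exact hcb
      exact hcommon _ h1 h2
    have hEq : H.induce (s : Set V) = G.induce (s : Set V) := by
      ext a b
      show H.Adj (a : V) (b : V) ↔ G.Adj (a : V) (b : V)
      rw [hH]
      constructor
      · rintro (h | ⟨h1, h2⟩ | ⟨h1, h2⟩)
        · exact h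
        · exact absurd ⟨h1 ▸ a.2, h2 ▸ b.2⟩ hnot
        · exact absurd ⟨h2 ▸ b.2, h1 ▸ a.2⟩ hnot
      · exact Or.inl
    rw [hEq]; exact ⟨e⟩
  -- the new 5-cycle
  set s₀ : Finset V := {u, w, v (i+2), v (i+3), v (i+4)} with hs₀
  have hcard₀ : s₀.card = 5 := by
    rw [hs₀, Finset.card_insert_of_notMem (by simp [huw', hune2, hune3, hune4]),
        Finset.card_insert_of_notMem (by simp [hwne2, hwne3, hwne4]),
        Finset.card_insert_of_notMem (by simp [hv23, hv24]),
        Finset.card_insert_of_notMem (by simp [hv34]),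
        Finset.card_singleton]
  have hH1 : H.Adj u w := (hH u w).mpr (Or.inr (Or.inl ⟨rfl, rfl⟩))
  have hH2 : H.Adj w (v (i+2)) := (hH _ _).mpr (Or.inl hw2)
  have hH3 : H.Adj (v (i+2)) (v (i+3)) := (hH _ _).mpr (Or.inl e23)
  have hH4 : H.Adj (v (i+3)) (v (i+4)) := (hH _ _).mpr (Or.inl e34)
  have hH5 : H.Adj (v (i+4)) u := (hH _ _).mpr (Or.inl hu4.symm)
  have hN1 : ¬ H.Adj u (v (i+2)) := by
    rw [hH]
    rintro (h | ⟨-, h⟩ | ⟨h, -⟩)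
    · exact hnu2 h
    · exact hwne2 h.symm
    · exact huw' h
  have hN2 : ¬ H.Adj u (v (i+3)) := by
    rw [hH]
    rintro (h | ⟨-, h⟩ | ⟨h, -⟩)
    · exact hnu3 h
    · exact hwne3 h.symm
    · exact huw' h
  have hN3 : ¬ H.Adj w (v (i+3)) := by
    rw [hH]
    rintro (h | ⟨h, -⟩ | ⟨-, h⟩)
    · exact hnw3 h
    · exact huw' h.symm
    · exact hune3 h.symm
  have hN4 : ¬ H.Adj w (v (i+4)) := by
    rw [hH]
    rintro (h | ⟨h, -⟩ | ⟨-, h⟩)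
    · exact hnw4 h
    · exact huw' h.symm
    · exact hune4 h.symm
  have hN5 : ¬ H.Adj (v (i+2)) (v (i+4)) := by
    rw [hH]
    rintro (h | ⟨h, -⟩ | ⟨h, -⟩)
    · exact (by decide : ∀ i : Fin 5, ¬(i+4 = i+2+1 ∨ i+2 = i+4+1)) i ((hvadj _ _).mp h)
    · exact hune2 h.symm
    · exact hwne2 h.symm
  have hfmem : ∀ j : Fin 5,
      ![u, w, v (i+2), v (i+3), v (i+4)] j ∈ ((s₀ : Finset V) : Set V) := by
    intro j; fin_cases j <;> simp [hs₀]
  have hfinj : Function.Injective ![u, w, v (i+2), v (i+3), v (i+4)] := by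
    intro a b h
    fin_cases a <;> fin_cases b <;>
      first
        | rfl
        | (simp only [Matrix.cons_val_zero, Matrix.cons_val_one, Matrix.head_cons,
            Matrix.cons_val_two, Matrix.cons_val_three, Matrix.cons_val_four,
            Matrix.tail_cons, Matrix.head_fin_const, Fin.mk_zero, Fin.mk_one,
            Matrix.cons_val', Matrix.cons_val_fin_one, Matrix.empty_val'] at h
           first
             | exact absurd h huw' | exact absurd h.symm huw'
             | exact absurd h hune2 | exact absurd h.symm hune2
             | exact absurd h hune3 | exact absurd h.symm hune3
             | exact absurd h hune4 | exact absurd h.symm hune4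
             | exact absurd h hwne2 | exact absurd h.symm hwne2
             | exact absurd h hwne3 | exact absurd h.symm hwne3
             | exact absurd h hwne4 | exact absurd h.symm hwne4
             | exact absurd h hv23 | exact absurd h.symm hv23
             | exact absurd h hv24 | exact absurd h.symm hv24
             | exact absurd h hv34 | exact absurd h.symm hv34)
  have hinj0 : Function.Injective
      (fun j : Fin 5 => (⟨![u, w, v (i+2), v (i+3), v (i+4)] j, hfmem j⟩ :
        ((s₀ : Finset V) : Set V))) :=
    fun a b h => hfinj (congrArg Subtype.val h)
  have hsurj0 : Function.Surjective
      (fun j : Fin 5 => (⟨![u, w, v (i+2), v (i+3), v (i+4)] j, hfmem j⟩ :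
        ((s₀ : Finset V) : Set V))) := by
    rintro ⟨x, hx⟩
    have hx5 : x = u ∨ x = w ∨ x = v (i+2) ∨ x = v (i+3) ∨ x = v (i+4) := by
      simpa [hs₀] using hx
    rcases hx5 with rfl | rfl | rfl | rfl | rfl
    · exact ⟨0, Subtype.ext (by simp)⟩
    · exact ⟨1, Subtype.ext (by simp)⟩
    · exact ⟨2, Subtype.ext (by simp)⟩
    · exact ⟨3, Subtype.ext (by simp)⟩
    · exact ⟨4, Subtype.ext (by simp)⟩
  have hs0mem : s₀ ∈ {s : Finset V | s.card = 5 ∧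
      Nonempty (H.induce (s : Set V) ≃g cycleGraph 5)} := by
    refine ⟨hcard₀, ⟨SimpleGraph.Iso.symm
      { toEquiv := Equiv.ofBijective _ ⟨hinj0, hsurj0⟩, map_rel_iff' := ?_ }⟩⟩
    intro a b
    show H.Adj (![u, w, v (i+2), v (i+3), v (i+4)] a)
        (![u, w, v (i+2), v (i+3), v (i+4)] b) ↔ (cycleGraph 5).Adj a b
    fin_cases a <;> fin_cases b <;>
      first
        | exact iff_of_false (H.loopless.irrefl _) (by decide)
        | exact iff_of_true hH1 (by decide)
        | exact iff_of_true hH1.symm (by decide)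
        | exact iff_of_true hH2 (by decide)
        | exact iff_of_true hH2.symm (by decide)
        | exact iff_of_true hH3 (by decide)
        | exact iff_of_true hH3.symm (by decide)
        | exact iff_of_true hH4 (by decide)
        | exact iff_of_true hH4.symm (by decide)
        | exact iff_of_true hH5 (by decide)
        | exact iff_of_true hH5.symm (by decide)
        | exact iff_of_false hN1 (by decide)
        | exact iff_of_false (fun h => hN1 h.symm) (by decide)
        | exact iff_of_false hN2 (by decide)
        | exact iff_of_false (fun h => hN2 h.symm) (by decide)
        | exact iff_of_false hN3 (by decide)
        | exact iff_of_false (fun h => hN3 h.symm) (by decide)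
        | exact iff_of_false hN4 (by decide)
        | exact iff_of_false (fun h => hN4 h.symm) (by decide)
        | exact iff_of_false hN5 (by decide)
        | exact iff_of_false (fun h => hN5 h.symm) (by decide)
  have hs0not : s₀ ∉ {s : Finset V | s.card = 5 ∧
      Nonempty (G.induce (s : Set V) ≃g cycleGraph 5)} := by
    rintro ⟨-, ⟨e⟩⟩
    have hus : u ∈ ((s₀ : Finset V) : Set V) := by simp [hs₀]
    obtain ⟨b, c, hbc, hb, hc⟩ := (by decide : ∀ a : Fin 5, ∃ b c : Fin 5, b ≠ c ∧
      (cycleGraph 5).Adj a b ∧ (cycleGraph 5).Adj a c) (e ⟨u, hus⟩)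
    have h1 : (G.induce (s₀ : Set V)).Adj ⟨u, hus⟩ (e.symm b) := by
      rw [← e.map_rel_iff, RelIso.apply_symm_apply]; exact hb
    have h2 : (G.induce (s₀ : Set V)).Adj ⟨u, hus⟩ (e.symm c) := by
      rw [← e.map_rel_iff, RelIso.apply_symm_apply]; exact hc
    have key : ∀ x : ((s₀ : Finset V) : Set V), (G.induce (s₀ : Set V)).Adj ⟨u, hus⟩ x →
        x = (⟨v (i+4), by simp [hs₀]⟩ : ((s₀ : Finset V) : Set V)) := by
      rintro ⟨x, hx⟩ hadj
      have hGx : G.Adj u x := hadj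
      have hx5 : x = u ∨ x = w ∨ x = v (i+2) ∨ x = v (i+3) ∨ x = v (i+4) := by
        simpa [hs₀] using hx
      rcases hx5 with rfl | rfl | rfl | rfl | rfl
      · exact absurd hGx (G.loopless.irrefl _)
      · exact absurd hGx huw
      · exact absurd hGx hnu2
      · exact absurd hGx hnu3
      · rfl
    exact hbc (e.symm.injective ((key _ h1).trans (key _ h2).symm))
  have hss : {s : Finset V | s.card = 5 ∧
      Nonempty (G.induce (s : Set V) ≃g cycleGraph 5)} ⊂
      {s : Finset V | s.card = 5 ∧ Nonempty (H.induce (s : Set V) ≃g cycleGraph 5)} :=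
    (Set.ssubset_iff_of_subset hsubset).mpr ⟨s₀, hs0mem, hs0not⟩
  have hlt : c5Count G < c5Count H := Set.ncard_lt_ncard hss (Set.toFinite _)
  exact absurd (hmax H hHTF) (Nat.not_le.mpr hlt)
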